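/- Let H be a real inner product space and q*, c real numbers with c < q*. Let σ¹, …, σᵐ and τ¹, …, τᵐ be vectors in H with ‖σˡ‖² = ‖τˡ‖² = q* for all l, ⟨σˡ, σˡ'⟩ ≤ c and ⟨τˡ, τˡ'⟩ ≤ c for all l ≠ l', and ⟨σˡ, τˡ'⟩ = c for all l, l'. Then the barycenters σ̄ = (1/m)∑σˡ and τ̄ = (1/m)∑τˡ satisfy ‖σ̄ − τ̄‖² ≤ 2(q* − c)/m. -/

import Mathlib

theorem stmt_8 {H : Type*} [NormedAddCommGroup H] [InnerProductSpace ℝ H]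
    (m : ℕ) (hm : 1 ≤ m) (qs c : ℝ) (hc : c < qs)
    (σ τ : Fin m → H)
    (hnormσ : ∀ l, ‖σ l‖ ^ 2 = qs) (hnormτ : ∀ l, ‖τ l‖ ^ 2 = qs)
    (hσ : ∀ l l', l ≠ l' → (inner ℝ (σ l) (σ l') : ℝ) ≤ c)
    (hτ : ∀ l l', l ≠ l' → (inner ℝ (τ l) (τ l') : ℝ) ≤ c)
    (hστ : ∀ l l', (inner ℝ (σ l) (τ l') : ℝ) = c) :
    ‖(m : ℝ)⁻¹ • ∑ l, σ l - (m : ℝ)⁻¹ • ∑ l, τ l‖ ^ 2 ≤ 2 * (qs - c) / m := by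
  have hm0 : (0 : ℝ) < m := by exact_mod_cast hm
  set S := ∑ l, σ l with hSdef
  set T := ∑ l, τ l with hTdef
  have sumbound : ∀ (f : Fin m → H), (∀ l, ‖f l‖ ^ 2 = qs) →
      (∀ l l', l ≠ l' → (inner ℝ (f l) (f l') : ℝ) ≤ c) →
      (inner ℝ (∑ l, f l) (∑ l, f l) : ℝ) ≤ m * qs + (m * (m - 1)) * c := by
    intro f hn hod
    rw [sum_inner]
    have : ∀ l ∈ Finset.univ, (inner ℝ (f l) (∑ l', f l') : ℝ) ≤ qs + (m - 1) * c := by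
      intro l _
      rw [inner_sum]
      have := Finset.add_sum_erase Finset.univ (fun l' => (inner ℝ (f l) (f l') : ℝ))
        (Finset.mem_univ l)
      rw [← this]
      have hdiag : (inner ℝ (f l) (f l) : ℝ) = qs := by
        rw [real_inner_self_eq_norm_sq, ← hn l]
      have hoff : ∑ l' ∈ Finset.univ.erase l, (inner ℝ (f l) (f l') : ℝ) ≤ (m - 1) * c := by
        calc ∑ l' ∈ Finset.univ.erase l, (inner ℝ (f l) (f l') : ℝ)
            ≤ ∑ l' ∈ Finset.univ.erase l, c := by
              apply Finset.sum_le_sum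
              intro l' hl'
              exact hod l l' (Ne.symm (Finset.ne_of_mem_erase hl'))
          _ = (m - 1) * c := by
              rw [Finset.sum_const, Finset.card_erase_of_mem (Finset.mem_univ l),
                Finset.card_univ, Fintype.card_fin, nsmul_eq_mul]
              push_cast [Nat.cast_sub hm]
              ring
      linarith
    calc ∑ l, (inner ℝ (f l) (∑ l', f l') : ℝ) ≤ ∑ _l : Fin m, (qs + (m - 1) * c) :=
          Finset.sum_le_sum this
      _ = m * qs + (m * (m - 1)) * c := by
          rw [Finset.sum_const, Finset.card_univ, Fintype.card_fin, nsmul_eq_mul]; ring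
  have hSS := sumbound σ hnormσ hσ
  have hTT := sumbound τ hnormτ hτ
  have hST : (inner ℝ S T : ℝ) = m ^ 2 * c := by
    rw [hSdef, hTdef, sum_inner]
    have : ∀ l : Fin m, (inner ℝ (σ l) (∑ l', τ l') : ℝ) = m * c := by
      intro l
      rw [inner_sum]
      simp [hστ, Finset.sum_const, Finset.card_univ, nsmul_eq_mul]
    rw [Finset.sum_congr rfl (fun l _ => this l)]
    simp [Finset.sum_const, Finset.card_univ, nsmul_eq_mul]
    ring
  have key : ‖(m : ℝ)⁻¹ • S - (m : ℝ)⁻¹ • T‖ ^ 2 =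
      (m : ℝ)⁻¹ ^ 2 * ((inner ℝ S S : ℝ) - 2 * inner ℝ S T + inner ℝ T T) := by
    rw [← real_inner_self_eq_norm_sq]
    rw [inner_sub_sub_self]
    simp only [real_inner_smul_left, real_inner_smul_right]
    rw [real_inner_comm T S]
    ring
  rw [key, hST]
  have h2 : (m : ℝ)⁻¹ ^ 2 * ((inner ℝ S S : ℝ) - 2 * (m ^ 2 * c) + inner ℝ T T) ≤
      (m : ℝ)⁻¹ ^ 2 * (2 * (m * qs + (m * (m - 1)) * c) - 2 * (m ^ 2 * c)) := by
    apply mul_le_mul_of_nonneg_left _ (by positivity)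
    linarith
  refine h2.trans (le_of_eq ?_)
  field_simp
  ring
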